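/- arXiv:2409.11204 — 5 statements merged into one kernel-verified Lean document; each statement's English description precedes it below -/
import Mathlib

section
/- Let U and X be nonempty types, let g : U → X be a surjection and g' : X → U a section of g (i.e. g ∘ g' = id on X). Let Y be a type and let G : (X → Y) → X → X → Y and H : Y → Y → Y be arbitrary functions. Suppose f : U → Y satisfies G (f ∘ g') (g u) (g v) = H (f u) (f v) for all u, v ∈ U, and suppose there exists u₀ ∈ U such that either the map y ↦ H (f u₀) y or the map y ↦ H y (f u₀) is injective on the image f(U) (i.e. for all u, u' ∈ U, H (f u₀) (f u) = H (f u₀) (f u') implies f u = f u', respectively with the arguments of H reversed). Then f is a canonical solution: there exists ρ : X → Y satisfying G ρ x y = H (ρ x) (ρ y) for all x, y ∈ X such that f = ρ ∘ g. -/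
/-- Section method, part 3: a solution `f` of the original equation such that
`H (f u₀) ·` (or `H · (f u₀)`) is injective on the image of `f` is a canonical
solution, i.e. `f = ρ ∘ g` for some solution `ρ` of the characteristic equation. -/
theorem section_method_part3 {U X Y : Type*} [Nonempty U] [Nonempty X]
    (g : U → X) (g' : X → U)
    (hg : Function.Surjective g) (hsec : ∀ x : X, g (g' x) = x)
    (G : (X → Y) → X → X → Y) (H : Y → Y → Y) (f : U → Y)
    (hf : ∀ u v : U, G (f ∘ g') (g u) (g v) = H (f u) (f v))
    (hinj : ∃ u₀ : U,
      (∀ u u' : U, H (f u₀) (f u) = H (f u₀) (f u') → f u = f u') ∨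
      (∀ u u' : U, H (f u) (f u₀) = H (f u') (f u₀) → f u = f u')) :
    ∃ ρ : X → Y, (∀ x y : X, G ρ x y = H (ρ x) (ρ y)) ∧ f = ρ ∘ g := by
  obtain ⟨u₀, h₀⟩ := hinj
  have key : ∀ u : U, f u = f (g' (g u)) := by
    intro u
    rcases h₀ with h | h
    · apply h
      have h1 := hf u₀ u
      have h2 := hf u₀ (g' (g u))
      rw [hsec] at h2
      rw [← h1, ← h2]
    · apply h
      have h1 := hf u u₀
      have h2 := hf (g' (g u)) u₀
      rw [hsec] at h2
      rw [← h1, ← h2]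
  refine ⟨f ∘ g', ?_, ?_⟩
  · intro x y
    obtain ⟨u, rfl⟩ := hg x
    obtain ⟨v, rfl⟩ := hg y
    rw [hf u v]
    simp only [Function.comp_apply]
    rw [← key u, ← key v]
  · funext u
    exact key u
end

section
/- Let n be a positive integer, let m ≥ 3 be an odd integer, let (Y,+) be an abelian group that is (n!)-divisible (the map y ↦ (n!) • y is bijective on Y), and let r : ℝ → ℝ be the real m-th root function, i.e. (r x)^m = x for all x ∈ ℝ. Then f : ℝ → Y satisfies Σ_{i=0}^{n} (-1)^{n-i} (n choose i) • f(r(u^m + i·v^m)) = (n!) • f(v) for all u, v ∈ ℝ if and only if there exists an n-monomial ρ : ℝ → Y (i.e. Δ_y^n ρ(x) = (n!) • ρ(y) for all x, y ∈ ℝ) such that f(u) = ρ(u^m) for all u ∈ ℝ. -/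
open Finset

/-- The finite-difference operator `Δ_y^j` applied to `ρ : ℝ → Y` at `x`. -/
def fdiff {Y : Type*} [AddCommGroup Y]
    (j : ℕ) (y : ℝ) (ρ : ℝ → Y) (x : ℝ) : Y :=
  ∑ i ∈ Finset.range (j + 1), ((-1) ^ (j - i) * (j.choose i) : ℤ) • ρ (x + i * y)

/-- Radical-monomial equation, odd exponent: `f : ℝ → Y` satisfies
`Σ_{i=0}^{n} (-1)^{n-i} C(n,i) • f(r(u^m + i v^m)) = n! • f(v)` iff
`f(u) = ρ(u^m)` for some `n`-monomial `ρ : ℝ → Y`. -/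
theorem radical_monomial_odd {Y : Type*} [AddCommGroup Y]
    (n : ℕ) (hn : 0 < n)
    (hdiv : Function.Bijective (fun y : Y => (n.factorial : ℤ) • y))
    (m : ℕ) (hm : 3 ≤ m) (hmodd : Odd m)
    (r : ℝ → ℝ) (hr : ∀ x : ℝ, (r x) ^ m = x)
    (f : ℝ → Y) :
    (∀ u v : ℝ,
        ∑ i ∈ Finset.range (n + 1),
          ((-1) ^ (n - i) * (n.choose i) : ℤ) • f (r (u ^ m + i * v ^ m)) =
        (n.factorial : ℤ) • f v) ↔
      ∃ ρ : ℝ → Y,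
        (∀ x y : ℝ, fdiff n y ρ x = (n.factorial : ℤ) • ρ y) ∧
        ∀ u : ℝ, f u = ρ (u ^ m) := by
  have hinj : Function.Injective (fun a : ℝ => a ^ m) :=
    (Odd.strictMono_pow hmodd).injective
  have hru : ∀ u : ℝ, r (u ^ m) = u := fun u => hinj (by simp [hr])
  constructor
  · intro h
    refine ⟨fun x => f (r x), fun x y => ?_, fun u => by simp [hru]⟩
    have := h (r x) (r y)
    simpa [fdiff, hr] using this
  · rintro ⟨ρ, hρ, hf⟩ u v
    have : ∀ i : ℕ, f (r (u ^ m + i * v ^ m)) = ρ (u ^ m + i * v ^ m) := by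
      intro i; rw [hf, hr]
    simp only [this, hf]
    exact hρ (u ^ m) (v ^ m)
end

section
/- Let n be a positive integer, let m ≥ 2 be an even integer, and let (Y,+) be an abelian group that is (n!)-divisible (the map y ↦ (n!) • y is bijective on Y). Then f : ℝ → Y satisfies Σ_{i=0}^{n} (-1)^{n-i} (n choose i) • f((u^m + i·v^m)^{1/m}) = (n!) • f(v) for all u, v ∈ ℝ (where t^{1/m} denotes the nonnegative real m-th root of t ≥ 0; note u^m + i·v^m ≥ 0) if and only if there exists ρ : ℝ → Y which is an n-monomial on [0,∞) (i.e. Δ_y^n ρ(x) = (n!) • ρ(y) for all x, y ∈ [0,∞)) such that f(u) = ρ(u^m) for all u ∈ ℝ. -/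
open Finset Real

/-- Radical-monomial equation, even exponent: `f : ℝ → Y` satisfies
`Σ_{i=0}^{n} (-1)^{n-i} C(n,i) • f((u^m + i v^m)^{1/m}) = n! • f(v)` iff
`f(u) = ρ(u^m)` for some `ρ : ℝ → Y` which is an `n`-monomial on `[0,∞)`.
Here `t^{1/m}` is the nonnegative real `m`-th root, given by `Real.rpow`. -/
theorem radical_monomial_even {Y : Type*} [AddCommGroup Y]
    (n : ℕ) (hn : 0 < n)
    (hdiv : Function.Bijective (fun y : Y => (n.factorial : ℤ) • y))
    (m : ℕ) (hm : 2 ≤ m) (hmeven : Even m)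
    (f : ℝ → Y) :
    (∀ u v : ℝ,
        ∑ i ∈ Finset.range (n + 1),
          ((-1) ^ (n - i) * (n.choose i) : ℤ) •
            f ((u ^ m + i * v ^ m) ^ ((m : ℝ)⁻¹)) =
        (n.factorial : ℤ) • f v) ↔
      ∃ ρ : ℝ → Y,
        (∀ x ∈ Set.Ici (0 : ℝ), ∀ y ∈ Set.Ici (0 : ℝ),
          fdiff n y ρ x = (n.factorial : ℤ) • ρ y) ∧
        ∀ u : ℝ, f u = ρ (u ^ m) := by
  have hm0 : m ≠ 0 := by omega
  constructor
  · intro h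
    refine ⟨fun t => f (t ^ ((m:ℝ)⁻¹)), ?_, ?_⟩
    · intro x hx y hy
      have hu : (x ^ ((m:ℝ)⁻¹)) ^ m = x := Real.rpow_inv_natCast_pow hx hm0
      have hv : (y ^ ((m:ℝ)⁻¹)) ^ m = y := Real.rpow_inv_natCast_pow hy hm0
      have := h (x ^ ((m:ℝ)⁻¹)) (y ^ ((m:ℝ)⁻¹))
      rw [hu, hv] at this
      simpa [fdiff] using this
    · intro u
      have habs : u ^ m = |u| ^ m := (hmeven.pow_abs u).symm
      have h1 : (u ^ m : ℝ) ^ ((m:ℝ)⁻¹) = |u| := by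
        rw [habs, Real.pow_rpow_inv_natCast (abs_nonneg u) hm0]
      have hfe : f u = f |u| := by
        rcases abs_cases u with ⟨h', _⟩ | ⟨h', _⟩
        · rw [h']
        · have e1 := h 0 u
          have e2 := h 0 |u|
          rw [show |u| ^ m = u ^ m from habs.symm] at e2
          exact (hdiv.injective (e1.symm.trans e2) : f u = f |u|)
      simp only [h1]
      exact hfe
  · rintro ⟨ρ, hρ, hf⟩
    intro u v
    have hx : (0:ℝ) ≤ u ^ m := hmeven.pow_nonneg u
    have hy : (0:ℝ) ≤ v ^ m := hmeven.pow_nonneg v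
    have key := hρ (u ^ m) hx (v ^ m) hy
    rw [hf v, ← key]
    unfold fdiff
    apply Finset.sum_congr rfl
    intro i _
    congr 1
    rw [hf]
    congr 1
    have hnn : (0:ℝ) ≤ u ^ m + i * v ^ m := by positivity
    exact Real.rpow_inv_natCast_pow hnn hm0
end

section
/- Let n be a positive integer and let (Y,+) be an abelian group that is (n!)-divisible (the map y ↦ (n!) • y is bijective on Y). Let U := ℝ \ {kπ | k ∈ ℤ} = {u ∈ ℝ | sin u ≠ 0}. Then f : ℝ → Y satisfies Σ_{i=0}^{n} (-1)^{n-i} (n choose i) • f(arcsin |sin u · (sin v)^i|) = (n!) • f(v) for all u, v ∈ U if and only if there exists ρ : ℝ → Y which is an n-monomial on (-∞, 0] (i.e. Δ_y^n ρ(x) = (n!) • ρ(y) for all x, y ∈ (-∞, 0]) such that f(u) = ρ(ln |sin u|) for all u ∈ U. -/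
open Finset Real

/-- Arcsine-monomial equation: on `U = {u : ℝ | sin u ≠ 0}`, `f` satisfies
`Σ_{i=0}^{n} (-1)^{n-i} C(n,i) • f(arcsin |sin u · (sin v)^i|) = n! • f(v)` iff
`f(u) = ρ(ln |sin u|)` on `U` for some `ρ : ℝ → Y` which is an `n`-monomial
on `(-∞, 0]`. -/
theorem arcsine_monomial {Y : Type*} [AddCommGroup Y]
    (n : ℕ) (hn : 0 < n)
    (hdiv : Function.Bijective (fun y : Y => (n.factorial : ℤ) • y))
    (f : ℝ → Y) :
    (∀ u v : ℝ, Real.sin u ≠ 0 → Real.sin v ≠ 0 →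
        ∑ i ∈ Finset.range (n + 1),
          ((-1) ^ (n - i) * (n.choose i) : ℤ) •
            f (Real.arcsin |Real.sin u * (Real.sin v) ^ i|) =
        (n.factorial : ℤ) • f v) ↔
      ∃ ρ : ℝ → Y,
        (∀ x ∈ Set.Iic (0 : ℝ), ∀ y ∈ Set.Iic (0 : ℝ),
          fdiff n y ρ x = (n.factorial : ℤ) • ρ y) ∧
        ∀ u : ℝ, Real.sin u ≠ 0 → f u = ρ (Real.log |Real.sin u|) := by
  constructor
  · intro h
    set ρ : ℝ → Y := fun x => f (Real.arcsin (Real.exp x)) with hρ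
    have key : ∀ x : ℝ, x ≤ 0 → Real.sin (Real.arcsin (Real.exp x)) = Real.exp x := by
      intro x hx
      exact Real.sin_arcsin (by linarith [Real.exp_pos x]) (by rw [← Real.exp_zero]; exact Real.exp_le_exp.mpr hx)
    refine ⟨ρ, ?_, ?_⟩
    · intro x hx y hy
      simp only [Set.mem_Iic] at hx hy
      have hx' := key x hx
      have hy' := key y hy
      have H := h (Real.arcsin (Real.exp x)) (Real.arcsin (Real.exp y))
        (by rw [hx']; exact (Real.exp_pos x).ne') (by rw [hy']; exact (Real.exp_pos y).ne')
      rw [hx', hy'] at H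
      unfold fdiff
      rw [show (n.factorial : ℤ) • ρ y = (n.factorial : ℤ) • f (Real.arcsin (Real.exp y)) from rfl,
        ← H]
      apply Finset.sum_congr rfl
      intro i _
      congr 2
      rw [abs_of_pos (by positivity), ← Real.exp_nat_mul, ← Real.exp_add]
    · intro u hu
      have hsle : |Real.sin u| ≤ 1 := abs_sin_le_one u
      have harc : Real.sin (Real.arcsin |Real.sin u|) = |Real.sin u| :=
        Real.sin_arcsin (by linarith [abs_nonneg (Real.sin u)]) hsle
      have hane : Real.sin (Real.arcsin |Real.sin u|) ≠ 0 := by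
        rw [harc]; exact abs_ne_zero.mpr hu
      have inv : (n.factorial : ℤ) • f u = (n.factorial : ℤ) • f (Real.arcsin |Real.sin u|) := by
        have e1 := h (π / 2) u (by simp) hu
        have e2 := h (π / 2) (Real.arcsin |Real.sin u|) (by simp) hane
        rw [← e1, ← e2]
        apply Finset.sum_congr rfl
        intro i _
        congr 3
        simp [harc, Real.sin_pi_div_two, abs_pow, abs_abs]
      have := hdiv.injective inv
      rw [this, hρ]
      congr 2
      rw [Real.exp_log (abs_pos.mpr hu)]
  · rintro ⟨ρ, hmono, hfρ⟩ u v hu hv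
    set x := Real.log |Real.sin u| with hxdef
    set y := Real.log |Real.sin v| with hydef
    have hx : x ≤ 0 := Real.log_nonpos (abs_nonneg _) (abs_sin_le_one u)
    have hy : y ≤ 0 := Real.log_nonpos (abs_nonneg _) (abs_sin_le_one v)
    have H := hmono x hx y hy
    unfold fdiff at H
    rw [hfρ v hv, ← H]
    apply Finset.sum_congr rfl
    intro i _
    congr 1
    have hle : |Real.sin u * Real.sin v ^ i| ≤ 1 := by
      rw [abs_mul, abs_pow]
      calc |Real.sin u| * |Real.sin v| ^ i ≤ 1 * 1 ^ i := by
            apply mul_le_mul (abs_sin_le_one u) (pow_le_pow_left₀ (abs_nonneg _) (abs_sin_le_one v) i)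
              (by positivity) zero_le_one
        _ = 1 := by simp
    have hne' : Real.sin u * Real.sin v ^ i ≠ 0 :=
      mul_ne_zero hu (pow_ne_zero i hv)
    have hsin : Real.sin (Real.arcsin |Real.sin u * Real.sin v ^ i|)
        = |Real.sin u * Real.sin v ^ i| :=
      Real.sin_arcsin (by linarith [abs_nonneg (Real.sin u * Real.sin v ^ i)]) hle
    rw [hfρ _ (by rw [hsin]; exact abs_ne_zero.mpr hne')]
    congr 1
    rw [hsin, abs_abs, abs_mul, abs_pow,
      Real.log_mul (abs_ne_zero.mpr hu) (pow_ne_zero i (abs_ne_zero.mpr hv)),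
      Real.log_pow]
end

section
/- Let n be a positive integer and let (Y,+) be an abelian group that is (n!)-divisible (the map y ↦ (n!) • y is bijective on Y). If f : ℝ → Y satisfies Σ_{i=0}^{n} (-1)^{n-i} (n choose i) • f(arcsin |sin u · (sin v)^i|) = (n!) • f(v) for all u, v ∈ ℝ (that is, the arcsine-monomial equation holds on a domain containing some point kπ, k ∈ ℤ), then f is identically zero. In particular, U = ℝ \ {kπ | k ∈ ℤ} is the maximal domain on which the arcsine-monomial equation admits nontrivial solutions. -/
open Finset Real

/-- If the arcsine-monomial equation holds for all real `u, v` (so in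
particular at points `u = kπ`, where `sin u = 0`), then `f` is identically
zero; thus `ℝ \ {kπ | k ∈ ℤ}` is the maximal domain admitting nontrivial
solutions. -/
theorem arcsine_monomial_trivial_on_full_domain {Y : Type*} [AddCommGroup Y]
    (n : ℕ) (hn : 0 < n)
    (hdiv : Function.Bijective (fun y : Y => (n.factorial : ℤ) • y))
    (f : ℝ → Y)
    (hf : ∀ u v : ℝ,
        ∑ i ∈ Finset.range (n + 1),
          ((-1) ^ (n - i) * (n.choose i) : ℤ) •
            f (Real.arcsin |Real.sin u * (Real.sin v) ^ i|) =
        (n.factorial : ℤ) • f v) :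
    ∀ v : ℝ, f v = 0 := by
  intro v
  have h := hf 0 v
  simp only [Real.sin_zero, zero_mul, abs_zero, Real.arcsin_zero] at h
  rw [← Finset.sum_smul] at h
  have hsum : (∑ i ∈ Finset.range (n + 1), ((-1) ^ (n - i) * (n.choose i) : ℤ)) = 0 := by
    have := Int.alternating_sum_range_choose (n := n)
    rw [if_neg hn.ne'] at this
    calc (∑ i ∈ Finset.range (n + 1), ((-1) ^ (n - i) * (n.choose i) : ℤ))
        = (-1) ^ n * ∑ i ∈ Finset.range (n + 1), ((-1) ^ i * (n.choose i) : ℤ) := by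
          rw [Finset.mul_sum]
          refine Finset.sum_congr rfl fun i hi => ?_
          rw [Finset.mem_range] at hi
          have hpow : ((-1 : ℤ)) ^ n = (-1) ^ (n - i) * (-1) ^ i := by
            rw [← pow_add, Nat.sub_add_cancel (Nat.lt_succ_iff.mp hi)]
          rw [hpow, mul_assoc, ← mul_assoc ((-1 : ℤ) ^ i), ← mul_pow]
          simp
      _ = 0 := by rw [this, mul_zero]
  rw [hsum, zero_smul] at h
  have := hdiv.injective (a₁ := f v) (a₂ := 0)
  simp only [smul_zero] at this
  exact this h.symm
end
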